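/- arXiv:0906.3427 — 5 statements merged into one kernel-verified Lean document; each statement's English description precedes it below -/
import Mathlib

section
/- For every finite graph G with at least one vertex, χ(G) ≤ χ_s(G) ≤ χ_l(G) ≤ 2χ(G) − 1, where χ(G) is the chromatic number of G. -/
/-- The Kneser graph `KG(n,k)`: vertices are the `k`-element subsets of an
`n`-element set, two vertices being adjacent iff they are disjoint. -/
def kneserGraph (n k : ℕ) : SimpleGraph {A : Finset (Fin n) // A.card = k} where
  Adj A B := A ≠ B ∧ Disjoint (A : Finset (Fin n)) (B : Finset (Fin n))
  symm := ⟨fun A B h => ⟨h.1.symm, h.2.symm⟩⟩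
  loopless := ⟨fun A h => h.1 rfl⟩

/-- A star-free coloring: a proper coloring by positive integers such that no
path on three vertices is colored using only two consecutive integers. -/
def IsStarFreeColoring {V : Type*} (G : SimpleGraph V) (c : V → ℕ) : Prop :=
  (∀ v, 1 ≤ c v) ∧
  (∀ u v, G.Adj u v → c u ≠ c v) ∧
  (∀ v u w, u ≠ w → G.Adj v u → G.Adj v w →
    ¬ ∃ a : ℕ, ({c u, c v, c w} : Set ℕ) ⊆ {a, a + 1})

/-- The star-free chromatic number: the least positive integer `t` such that `G`
admits a star-free coloring with colors in `{1, …, t}`. -/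
noncomputable def starFreeChromaticNumber {V : Type*} (G : SimpleGraph V) : ℕ :=
  sInf {t : ℕ | 0 < t ∧ ∃ c : V → ℕ, IsStarFreeColoring G c ∧ ∀ v, c v ∈ Set.Icc 1 t}

/-- A local coloring: a proper coloring by positive integers such that no path on
three vertices is colored using only two consecutive integers and no triangle is
colored using only three consecutive integers. -/
def IsLocalColoring {V : Type*} (G : SimpleGraph V) (c : V → ℕ) : Prop :=
  IsStarFreeColoring G c ∧
  (∀ u v w, G.Adj u v → G.Adj v w → G.Adj u w →
    ¬ ∃ a : ℕ, ({c u, c v, c w} : Set ℕ) ⊆ {a, a + 1, a + 2})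

/-- The local chromatic number: the minimum value (maximum color used) over all
local colorings of `G`. -/
noncomputable def localChromaticNumber {V : Type*} (G : SimpleGraph V) : ℕ :=
  sInf {t : ℕ | 0 < t ∧ ∃ c : V → ℕ, IsLocalColoring G c ∧ ∀ v, c v ∈ Set.Icc 1 t}

/-- For every finite graph `G` with at least one vertex,
`χ(G) ≤ χₛ(G) ≤ χₗ(G) ≤ 2χ(G) − 1`. -/
theorem chromatic_le_starFree_le_local_le (V : Type*) [Fintype V] [Nonempty V]
    (G : SimpleGraph V) :
    G.chromaticNumber ≤ (starFreeChromaticNumber G : ℕ∞) ∧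
    starFreeChromaticNumber G ≤ localChromaticNumber G ∧
    (localChromaticNumber G : ℕ∞) ≤ 2 * G.chromaticNumber - 1 := by

  classical
  -- the ℕ-valued chromatic number
  set n : ℕ := ENat.toNat G.chromaticNumber with hn
  have hcol : G.Colorable n := G.colorable_chromaticNumber_of_fintype
  have hchne : G.chromaticNumber ≠ ⊤ := by
    rw [SimpleGraph.chromaticNumber_ne_top_iff_exists]
    exact ⟨n, hcol⟩
  have hchr : (n : ℕ∞) = G.chromaticNumber := ENat.coe_toNat hchne
  have hn1 : 1 ≤ n := by
    by_contra h
    have hn0 : n = 0 := by omega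
    rw [hn0] at hcol
    exact (G.isEmpty_of_colorable_zero hcol).false (Classical.arbitrary V)
  -- a proper coloring with n colors
  obtain ⟨c0⟩ := hcol
  -- the doubled odd coloring
  set c : V → ℕ := fun v => 2 * (c0 v : ℕ) + 1 with hc
  have hodd : ∀ v, ∃ k, c v = 2 * k + 1 := fun v => ⟨(c0 v : ℕ), rfl⟩
  have hprop : ∀ u v, G.Adj u v → c u ≠ c v := by
    intro u v hadj heq
    simp only [hc] at heq
    exact c0.valid hadj (Fin.ext (by omega))
  have hsf : IsStarFreeColoring G c := by
    refine ⟨fun v => by simp [hc], hprop, ?_⟩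
    rintro v u w huw hvu hvw ⟨a, hsub⟩
    obtain ⟨ku, hku⟩ := hodd u
    obtain ⟨kv, hkv⟩ := hodd v
    have h1 : c u ∈ ({a, a + 1} : Set ℕ) := hsub (by simp)
    have h2 : c v ∈ ({a, a + 1} : Set ℕ) := hsub (by simp)
    have hne := hprop v u hvu
    simp only [Set.mem_insert_iff, Set.mem_singleton_iff] at h1 h2
    omega
  have hloc : IsLocalColoring G c := by
    refine ⟨hsf, ?_⟩
    rintro u v w huv hvw huw ⟨a, hsub⟩
    obtain ⟨ku, hku⟩ := hodd u
    obtain ⟨kv, hkv⟩ := hodd v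
    obtain ⟨kw, hkw⟩ := hodd w
    have h1 : c u ∈ ({a, a + 1, a + 2} : Set ℕ) := hsub (by simp)
    have h2 : c v ∈ ({a, a + 1, a + 2} : Set ℕ) := hsub (by simp)
    have h3 : c w ∈ ({a, a + 1, a + 2} : Set ℕ) := hsub (by simp)
    have hne1 := hprop u v huv
    have hne2 := hprop v w hvw
    have hne3 := hprop u w huw
    simp only [Set.mem_insert_iff, Set.mem_singleton_iff] at h1 h2 h3
    omega
  have hrange : ∀ v, c v ∈ Set.Icc 1 (2 * n - 1) := by
    intro v
    have := (c0 v).isLt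
    simp only [Set.mem_Icc, hc]
    omega
  -- sets
  set Sl := {t : ℕ | 0 < t ∧ ∃ c : V → ℕ, IsLocalColoring G c ∧ ∀ v, c v ∈ Set.Icc 1 t}
    with hSl
  set Ss := {t : ℕ | 0 < t ∧ ∃ c : V → ℕ, IsStarFreeColoring G c ∧ ∀ v, c v ∈ Set.Icc 1 t}
    with hSs
  have hmemL : (2 * n - 1) ∈ Sl := ⟨by omega, c, hloc, hrange⟩
  have hLsub : Sl ⊆ Ss := by
    rintro t ⟨ht, d, hd, hdr⟩
    exact ⟨ht, d, hd.1, hdr⟩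
  have hlocal_le : localChromaticNumber G ≤ 2 * n - 1 := Nat.sInf_le hmemL
  have hLmem : localChromaticNumber G ∈ Sl := Nat.sInf_mem ⟨_, hmemL⟩
  have hsf_le : starFreeChromaticNumber G ≤ localChromaticNumber G :=
    Nat.sInf_le (hLsub hLmem)
  have hSmem : starFreeChromaticNumber G ∈ Ss := Nat.sInf_mem ⟨_, hLsub hmemL⟩
  obtain ⟨hspos, d, hd, hdr⟩ := hSmem
  set s := starFreeChromaticNumber G
  have hcolS : G.Colorable s := by
    refine ⟨SimpleGraph.Coloring.mk (fun v => ⟨d v - 1, ?_⟩) ?_⟩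
    · have h1 := (hdr v).1
      have h2 := (hdr v).2
      simp only [Set.mem_Icc] at *
      omega
    · intro u v hadj heq
      have hne := hd.2.1 u v hadj
      have h1 := (hdr u).1
      have h2 := (hdr v).1
      have := Fin.mk.injEq (d u - 1) _ (d v - 1) _ ▸ heq
      apply hne
      have : d u - 1 = d v - 1 := Fin.mk.inj_iff.mp heq
      omega
  refine ⟨hcolS.chromaticNumber_le, hsf_le, ?_⟩
  calc (localChromaticNumber G : ℕ∞) ≤ ((2 * n - 1 : ℕ) : ℕ∞) := by
        exact_mod_cast hlocal_le
    _ = 2 * (n : ℕ∞) - 1 := by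
        rw [ENat.coe_sub]
        push_cast
        rfl
    _ = 2 * G.chromaticNumber - 1 := by rw [hchr]
end

section
/- Let n and k be positive integers with n ≥ 2k ≥ 4. Define c on the vertices of KG(n,k) by c(A) = 2·min(A) − 1 if min(A) ≤ n − 2k + 1, and c(A) = 2n − 4k + 2 otherwise. Then c is a local coloring (hence also a star-free coloring) of KG(n,k) with value 2n − 4k + 2; consequently χ_s(KG(n,k)) ≤ χ_l(KG(n,k)) ≤ 2n − 4k + 2. -/
/-- The coloring of `KG(n,k)` sending `A` to `2·min(A) − 1` when
`min(A) ≤ n − 2k + 1` (minima taken in the `1`-based ground set `{1, …, n}`)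
and to `2n − 4k + 2` otherwise. -/
noncomputable def kneserLocalColoring (n k : ℕ) :
    {A : Finset (Fin n) // A.card = k} → ℕ := fun A =>
  if sInf {m : ℕ | ∃ i ∈ (A : Finset (Fin n)), (i : ℕ) + 1 = m} ≤ n - 2 * k + 1 then
    2 * sInf {m : ℕ | ∃ i ∈ (A : Finset (Fin n)), (i : ℕ) + 1 = m} - 1
  else
    2 * n - 4 * k + 2

lemma sInf_eq_min' {n : ℕ} (A : Finset (Fin n)) (hA : A.Nonempty) :
    sInf {m : ℕ | ∃ i ∈ A, (i : ℕ) + 1 = m} = (A.min' hA : ℕ) + 1 := by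
  have hmem : (A.min' hA : ℕ) + 1 ∈ {m : ℕ | ∃ i ∈ A, (i : ℕ) + 1 = m} :=
    ⟨A.min' hA, A.min'_mem hA, rfl⟩
  apply le_antisymm (Nat.sInf_le hmem)
  apply le_csInf ⟨_, hmem⟩
  rintro m ⟨i, hi, rfl⟩
  exact Nat.add_le_add_right (A.min'_le i hi) 1

lemma kneserColorCases {n k : ℕ} (hk : 0 < k) (A : {A : Finset (Fin n) // A.card = k}) :
    ∃ m : ℕ, (∀ i ∈ (A : Finset (Fin n)), m ≤ (i : ℕ)) ∧
      (∃ i ∈ (A : Finset (Fin n)), (i : ℕ) = m) ∧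
      ((kneserLocalColoring n k A = 2 * m + 1 ∧ m ≤ n - 2 * k) ∨
       (kneserLocalColoring n k A = 2 * n - 4 * k + 2 ∧ n - 2 * k + 1 ≤ m)) := by
  have hA : (A : Finset (Fin n)).Nonempty := Finset.card_pos.mp (by rw [A.2]; exact hk)
  refine ⟨((A : Finset (Fin n)).min' hA : ℕ), fun i hi => (A : Finset (Fin n)).min'_le i hi,
    ⟨_, (A : Finset (Fin n)).min'_mem hA, rfl⟩, ?_⟩
  unfold kneserLocalColoring
  rw [sInf_eq_min' _ hA]
  split_ifs with h
  · exact Or.inl ⟨by omega, by omega⟩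
  · exact Or.inr ⟨rfl, by omega⟩

lemma kneserKeyImp {n k : ℕ} (h2k : 2 ≤ k) (hnk : 2 * k ≤ n) (u v : Finset (Fin n))
    (hu : u.card = k) (hv : v.card = k) (hd : Disjoint u v)
    (hu' : ∀ i ∈ u, n - 2 * k + 1 ≤ (i : ℕ)) (hv' : ∀ i ∈ v, n - 2 * k + 1 ≤ (i : ℕ)) :
    False := by
  have hsub : u ∪ v ⊆ Finset.Ici (⟨n - 2 * k + 1, by omega⟩ : Fin n) := by
    intro i hi
    rw [Finset.mem_Ici, Fin.le_def]
    rcases Finset.mem_union.mp hi with h | h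
    · exact hu' i h
    · exact hv' i h
  have h1 := Finset.card_le_card hsub
  rw [Finset.card_union_of_disjoint hd, Fin.card_Ici] at h1
  simp only [Fin.val_mk] at h1
  omega

lemma kneserKeyEq {n k : ℕ} (h2k : 2 ≤ k) (hnk : 2 * k ≤ n) (u v : Finset (Fin n))
    (hu : u.card = k) (hv : v.card = k) (hd : Disjoint u v)
    (hu' : ∀ i ∈ u, n - 2 * k ≤ (i : ℕ)) (hv' : ∀ i ∈ v, n - 2 * k ≤ (i : ℕ)) :
    u = Finset.Ici (⟨n - 2 * k, by omega⟩ : Fin n) \ v := by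
  have hsub : u ∪ v ⊆ Finset.Ici (⟨n - 2 * k, by omega⟩ : Fin n) := by
    intro i hi
    rw [Finset.mem_Ici, Fin.le_def]
    rcases Finset.mem_union.mp hi with h | h
    · exact hu' i h
    · exact hv' i h
  have heq : u ∪ v = Finset.Ici (⟨n - 2 * k, by omega⟩ : Fin n) := by
    apply Finset.eq_of_subset_of_card_le hsub
    rw [Finset.card_union_of_disjoint hd, Fin.card_Ici]
    simp only [Fin.val_mk]
    omega
  rw [← heq, Finset.union_sdiff_cancel_right hd]

/-- For `n ≥ 2k ≥ 4`, the above coloring is a local coloring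
(hence a star-free coloring) of `KG(n,k)` whose value is `2n − 4k + 2`;
consequently `χₛ(KG(n,k)) ≤ χₗ(KG(n,k)) ≤ 2n − 4k + 2`. -/
theorem kneserLocalColoring_isLocalColoring (n k : ℕ) (hk : 0 < k) (hn : 0 < n)
    (h2k : 2 ≤ k) (hnk : 2 * k ≤ n) :
    IsLocalColoring (kneserGraph n k) (kneserLocalColoring n k) ∧
    IsStarFreeColoring (kneserGraph n k) (kneserLocalColoring n k) ∧
    (∀ A, kneserLocalColoring n k A ∈ Set.Icc 1 (2 * n - 4 * k + 2)) ∧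
    (∃ A, kneserLocalColoring n k A = 2 * n - 4 * k + 2) ∧
    starFreeChromaticNumber (kneserGraph n k) ≤ localChromaticNumber (kneserGraph n k) ∧
    localChromaticNumber (kneserGraph n k) ≤ 2 * n - 4 * k + 2 := by
  set c := kneserLocalColoring n k with hcdef
  -- minima of disjoint sets are distinct
  have mins_ne : ∀ (x y : Finset (Fin n)) (mx my : ℕ), Disjoint x y →
      (∃ i ∈ x, (i : ℕ) = mx) → (∃ i ∈ y, (i : ℕ) = my) → mx ≠ my := by
    rintro x y mx my hd ⟨ix, hix, rfl⟩ ⟨iy, hiy, rfl⟩ h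
    have : ix = iy := Fin.ext h
    exact Finset.disjoint_left.mp hd hix (this ▸ hiy)
  -- "both minima large" is impossible for disjoint pairs
  have hRR : ∀ (x y : {A : Finset (Fin n) // A.card = k}) (mx my : ℕ),
      Disjoint (x : Finset (Fin n)) (y : Finset (Fin n)) →
      (∀ i ∈ (x : Finset (Fin n)), mx ≤ (i : ℕ)) →
      (∀ i ∈ (y : Finset (Fin n)), my ≤ (i : ℕ)) →
      ¬(n - 2 * k + 1 ≤ mx ∧ n - 2 * k + 1 ≤ my) := by
    rintro x y mx my hd hx hy ⟨h1, h2⟩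
    exact kneserKeyImp h2k hnk x y x.2 y.2 hd
      (fun i hi => le_trans h1 (hx i hi)) (fun i hi => le_trans h2 (hy i hi))
  -- properness
  have prop : ∀ u v, (kneserGraph n k).Adj u v → c u ≠ c v := by
    intro u v huv hcc
    obtain ⟨mu, hmuLe, hmuMem, hcu⟩ := kneserColorCases hk u
    obtain ⟨mv, hmvLe, hmvMem, hcv⟩ := kneserColorCases hk v
    rw [← hcdef] at hcu hcv
    have hne := mins_ne _ _ _ _ huv.2 hmuMem hmvMem
    have h := hRR u v mu mv huv.2 hmuLe hmvLe
    omega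
  -- star-free condition
  have sfree : ∀ v u w, u ≠ w → (kneserGraph n k).Adj v u → (kneserGraph n k).Adj v w →
      ¬ ∃ a : ℕ, ({c u, c v, c w} : Set ℕ) ⊆ {a, a + 1} := by
    rintro v u w huw hvu hvw ⟨a, hsub⟩
    obtain ⟨mu, hmuLe, hmuMem, hcu⟩ := kneserColorCases hk u
    obtain ⟨mv, hmvLe, hmvMem, hcv⟩ := kneserColorCases hk v
    obtain ⟨mw, hmwLe, hmwMem, hcw⟩ := kneserColorCases hk w
    rw [← hcdef] at hcu hcv hcw
    have h1 : c u = a ∨ c u = a + 1 := by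
      have := hsub (show c u ∈ ({c u, c v, c w} : Set ℕ) by simp); simpa using this
    have h2 : c v = a ∨ c v = a + 1 := by
      have := hsub (show c v ∈ ({c u, c v, c w} : Set ℕ) by simp); simpa using this
    have h3 : c w = a ∨ c w = a + 1 := by
      have := hsub (show c w ∈ ({c u, c v, c w} : Set ℕ) by simp); simpa using this
    have hne1 : c v ≠ c u := prop v u hvu
    have hne2 : c v ≠ c w := prop v w hvw
    have hr1 := hRR v u mv mu hvu.2 hmvLe hmuLe
    have hr2 := hRR v w mv mw hvw.2 hmvLe hmwLe
    have hnuv := mins_ne _ _ _ _ hvu.2 hmvMem hmuMem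
    have hnvw := mins_ne _ _ _ _ hvw.2 hmvMem hmwMem
    have hge : n - 2 * k ≤ mu ∧ n - 2 * k ≤ mv ∧ n - 2 * k ≤ mw := by omega
    have e1 := kneserKeyEq h2k hnk u v u.2 v.2 hvu.2.symm
      (fun i hi => le_trans hge.1 (hmuLe i hi)) (fun i hi => le_trans hge.2.1 (hmvLe i hi))
    have e2 := kneserKeyEq h2k hnk w v w.2 v.2 hvw.2.symm
      (fun i hi => le_trans hge.2.2 (hmwLe i hi)) (fun i hi => le_trans hge.2.1 (hmvLe i hi))
    exact huw (Subtype.ext (e1.trans e2.symm))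
  -- range
  have hrange : ∀ A, c A ∈ Set.Icc 1 (2 * n - 4 * k + 2) := by
    intro A
    obtain ⟨m, _, _, hc⟩ := kneserColorCases hk A
    rw [← hcdef] at hc
    rw [Set.mem_Icc]
    omega
  have hstar : IsStarFreeColoring (kneserGraph n k) c :=
    ⟨fun v => (hrange v).1, prop, sfree⟩
  -- triangle condition
  have htri : ∀ u v w, (kneserGraph n k).Adj u v → (kneserGraph n k).Adj v w →
      (kneserGraph n k).Adj u w →
      ¬ ∃ a : ℕ, ({c u, c v, c w} : Set ℕ) ⊆ {a, a + 1, a + 2} := by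
    rintro u v w huv hvw huw ⟨a, hsub⟩
    obtain ⟨mu, hmuLe, hmuMem, hcu⟩ := kneserColorCases hk u
    obtain ⟨mv, hmvLe, hmvMem, hcv⟩ := kneserColorCases hk v
    obtain ⟨mw, hmwLe, hmwMem, hcw⟩ := kneserColorCases hk w
    rw [← hcdef] at hcu hcv hcw
    have h1 : c u = a ∨ c u = a + 1 ∨ c u = a + 2 := by
      have := hsub (show c u ∈ ({c u, c v, c w} : Set ℕ) by simp); simpa using this
    have h2 : c v = a ∨ c v = a + 1 ∨ c v = a + 2 := by
      have := hsub (show c v ∈ ({c u, c v, c w} : Set ℕ) by simp); simpa using this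
    have h3 : c w = a ∨ c w = a + 1 ∨ c w = a + 2 := by
      have := hsub (show c w ∈ ({c u, c v, c w} : Set ℕ) by simp); simpa using this
    have hne1 : c u ≠ c v := prop u v huv
    have hne2 : c v ≠ c w := prop v w hvw
    have hne3 : c u ≠ c w := prop u w huw
    omega
  have hlocal : IsLocalColoring (kneserGraph n k) c := ⟨hstar, htri⟩
  -- a vertex achieving the top color
  have hexists : ∃ A, c A = 2 * n - 4 * k + 2 := by
    obtain ⟨A, hA⟩ : ∃ A : {A : Finset (Fin n) // A.card = k},
        ∀ i ∈ (A : Finset (Fin n)), n - 2 * k + 1 ≤ (i : ℕ) := by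
      refine ⟨⟨Finset.map ⟨fun j : Fin k => (⟨n - 2 * k + 1 + (j : ℕ), by
          have := j.isLt; omega⟩ : Fin n),
        fun a b h => Fin.ext (by
          have h' : n - 2 * k + 1 + (a : ℕ) = n - 2 * k + 1 + (b : ℕ) := congrArg Fin.val h
          omega)⟩ Finset.univ, by simp⟩, ?_⟩
      intro i hi
      simp only [Finset.mem_map, Finset.mem_univ, Function.Embedding.coeFn_mk,
        true_and] at hi
      obtain ⟨j, hj⟩ := hi
      have : (i : ℕ) = n - 2 * k + 1 + (j : ℕ) := by rw [← hj]; rfl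
      omega
    refine ⟨A, ?_⟩
    obtain ⟨m, hmLe, ⟨i, hi, hieq⟩, hc⟩ := kneserColorCases hk A
    rw [← hcdef] at hc
    have := hA i hi
    omega
  have hmemlocal : (2 * n - 4 * k + 2) ∈
      {t : ℕ | 0 < t ∧ ∃ c' : _ → ℕ, IsLocalColoring (kneserGraph n k) c' ∧
        ∀ v, c' v ∈ Set.Icc 1 t} := ⟨by omega, c, hlocal, hrange⟩
  have hle1 : localChromaticNumber (kneserGraph n k) ≤ 2 * n - 4 * k + 2 := by
    unfold localChromaticNumber
    exact Nat.sInf_le hmemlocal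
  have hle2 : starFreeChromaticNumber (kneserGraph n k) ≤
      localChromaticNumber (kneserGraph n k) := by
    have hne : {t : ℕ | 0 < t ∧ ∃ c' : _ → ℕ, IsLocalColoring (kneserGraph n k) c' ∧
        ∀ v, c' v ∈ Set.Icc 1 t}.Nonempty := ⟨2 * n - 4 * k + 2, hmemlocal⟩
    have hmem := Nat.sInf_mem hne
    obtain ⟨ht, c', hc', hr⟩ := hmem
    unfold starFreeChromaticNumber localChromaticNumber
    exact Nat.sInf_le ⟨ht, c', hc'.1, hr⟩
  exact ⟨hlocal, hstar, hrange, hexists, hle2, hle1⟩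
end

section
/- Let n and k be positive integers with n − 1 ≥ 2k ≥ 4. Then χ_s(KG(n,k)) ≤ χ_s(KG(n−1,k)) + 2; that is, any star-free coloring of KG(n−1,k) with colors in {1,…,t} can be extended to a star-free coloring of KG(n,k) with colors in {1,…,t+2}. -/
/-- The canonical identification of the vertices of `KG(n−1,k)` with the
`k`-subsets of `{1, …, n−1}` inside `KG(n,k)`. -/
def kneserVertexEmb (n k : ℕ) (A : {A : Finset (Fin (n - 1)) // A.card = k}) :
    {A : Finset (Fin n) // A.card = k} :=
  ⟨(A : Finset (Fin (n - 1))).map ⟨Fin.castLE (Nat.sub_le n 1), Fin.castLE_injective _⟩,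
    by simpa using A.2⟩


/-- Restriction of a finset of `Fin n` to `Fin (n-1)` via preimage. -/
noncomputable def restrFinset {n : ℕ} (A : Finset (Fin n)) : Finset (Fin (n - 1)) :=
  A.preimage (Fin.castLE (Nat.sub_le n 1)) ((Fin.castLE_injective _).injOn)

lemma mem_restrFinset {n : ℕ} {A : Finset (Fin n)} {x : Fin (n - 1)} :
    x ∈ restrFinset A ↔ Fin.castLE (Nat.sub_le n 1) x ∈ A := Finset.mem_preimage

lemma map_restrFinset {n : ℕ} (hn : 0 < n) {A : Finset (Fin n)}
    (hA : (⟨n - 1, Nat.sub_lt hn one_pos⟩ : Fin n) ∉ A) :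
    (restrFinset A).map ⟨Fin.castLE (Nat.sub_le n 1), Fin.castLE_injective _⟩ = A := by
  ext x
  simp only [Finset.mem_map, Function.Embedding.coeFn_mk, mem_restrFinset]
  constructor
  · rintro ⟨y, hy, rfl⟩; exact hy
  · intro hx
    have hne : (x : ℕ) ≠ n - 1 := by
      intro h
      apply hA
      have : (⟨n - 1, Nat.sub_lt hn one_pos⟩ : Fin n) = x := Fin.ext h.symm
      rw [this]; exact hx
    have hlt : (x : ℕ) < n - 1 := by have := x.isLt; omega
    exact ⟨⟨x, hlt⟩, hx, rfl⟩

lemma restrFinset_map {n : ℕ} (B : Finset (Fin (n - 1))) :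
    restrFinset (B.map ⟨Fin.castLE (Nat.sub_le n 1), Fin.castLE_injective _⟩) = B := by
  ext x
  simp only [mem_restrFinset, Finset.mem_map, Function.Embedding.coeFn_mk]
  constructor
  · rintro ⟨y, hy, h⟩
    rwa [(Fin.castLE_injective _) h] at hy
  · intro hx; exact ⟨x, hx, rfl⟩

lemma restrFinset_card {n : ℕ} (hn : 0 < n) {A : Finset (Fin n)}
    (hA : (⟨n - 1, Nat.sub_lt hn one_pos⟩ : Fin n) ∉ A) :
    (restrFinset A).card = A.card := by
  conv_rhs => rw [← map_restrFinset hn hA]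
  exact (Finset.card_map _).symm

lemma starFree_exists_aux {V : Type*} [Fintype V] (G : SimpleGraph V) :
    ∃ t : ℕ, 0 < t ∧ ∃ c : V → ℕ, IsStarFreeColoring G c ∧ ∀ v, c v ∈ Set.Icc 1 t := by
  classical
  let e := Fintype.equivFin V
  refine ⟨2 * Fintype.card V + 1, by omega, fun v => 2 * (e v : ℕ) + 1, ⟨?_, ?_, ?_⟩, ?_⟩
  · intro v; show 1 ≤ 2 * (e v : ℕ) + 1; omega
  · intro u v h heq
    simp only at heq
    have : (e u : ℕ) = (e v : ℕ) := by omega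
    exact h.ne (e.injective (Fin.val_injective this))
  · rintro v u w huw _ _ ⟨a, hsub⟩
    have hu : 2 * (e u : ℕ) + 1 = a ∨ 2 * (e u : ℕ) + 1 = a + 1 := by
      have := hsub (show 2 * (e u : ℕ) + 1 ∈ ({2 * (e u : ℕ) + 1, 2 * (e v : ℕ) + 1,
        2 * (e w : ℕ) + 1} : Set ℕ) by simp)
      simpa using this
    have hw : 2 * (e w : ℕ) + 1 = a ∨ 2 * (e w : ℕ) + 1 = a + 1 := by
      have := hsub (show 2 * (e w : ℕ) + 1 ∈ ({2 * (e u : ℕ) + 1, 2 * (e v : ℕ) + 1,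
        2 * (e w : ℕ) + 1} : Set ℕ) by simp)
      simpa using this
    have hne : (e u : ℕ) ≠ (e w : ℕ) := fun h => huw (e.injective (Fin.val_injective h))
    omega
  · intro v
    have := (e v).isLt
    show 2 * (e v : ℕ) + 1 ∈ Set.Icc 1 (2 * Fintype.card V + 1)
    simp only [Set.mem_Icc]
    omega

/-- For `n − 1 ≥ 2k ≥ 4`,
`χₛ(KG(n,k)) ≤ χₛ(KG(n−1,k)) + 2`; indeed any star-free coloring of `KG(n−1,k)`
with colors in `{1, …, t}` extends to a star-free coloring of `KG(n,k)` with
colors in `{1, …, t+2}`. -/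
theorem starFree_kneser_succ_le (n k : ℕ) (hk : 0 < k) (hn : 0 < n)
    (h2k : 2 ≤ k) (hnk : 2 * k ≤ n - 1) :
    starFreeChromaticNumber (kneserGraph n k) ≤
      starFreeChromaticNumber (kneserGraph (n - 1) k) + 2 ∧
    ∀ (t : ℕ) (c' : {A : Finset (Fin (n - 1)) // A.card = k} → ℕ),
      IsStarFreeColoring (kneserGraph (n - 1) k) c' →
      (∀ A, c' A ∈ Set.Icc 1 t) →
      ∃ c : {A : Finset (Fin n) // A.card = k} → ℕ,
        IsStarFreeColoring (kneserGraph n k) c ∧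
        (∀ A, c A ∈ Set.Icc 1 (t + 2)) ∧
        ∀ A, c (kneserVertexEmb n k A) = c' A := by
  classical
  have hext : ∀ (t : ℕ) (c' : {A : Finset (Fin (n - 1)) // A.card = k} → ℕ),
      IsStarFreeColoring (kneserGraph (n - 1) k) c' →
      (∀ A, c' A ∈ Set.Icc 1 t) →
      ∃ c : {A : Finset (Fin n) // A.card = k} → ℕ,
        IsStarFreeColoring (kneserGraph n k) c ∧
        (∀ A, c A ∈ Set.Icc 1 (t + 2)) ∧
        ∀ A, c (kneserVertexEmb n k A) = c' A := by
    intro t c' hc' hbd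
    set e : Fin n := ⟨n - 1, Nat.sub_lt hn one_pos⟩ with he
    -- the restricted vertex
    let rv : ∀ (A : {A : Finset (Fin n) // A.card = k}), e ∉ A.1 →
        {B : Finset (Fin (n - 1)) // B.card = k} :=
      fun A h => ⟨restrFinset A.1, (restrFinset_card hn h).trans A.2⟩
    set c : {A : Finset (Fin n) // A.card = k} → ℕ :=
      fun A => if h : e ∈ A.1 then t + 2 else c' (rv A h) with hc
    have hc_new : ∀ A, e ∈ A.1 → c A = t + 2 := fun A h => dif_pos h
    have hc_old : ∀ A (h : e ∉ A.1), c A = c' (rv A h) := fun A h => dif_neg h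
    -- injectivity of restriction on old vertices
    have hrv_inj : ∀ A B (hA : e ∉ A.1) (hB : e ∉ B.1), rv A hA = rv B hB → A = B := by
      intro A B hA hB hEq
      have h1 : restrFinset A.1 = restrFinset B.1 := congrArg Subtype.val hEq
      have h2 := congrArg (Finset.map
        ⟨Fin.castLE (Nat.sub_le n 1), Fin.castLE_injective _⟩) h1
      rw [map_restrFinset hn hA, map_restrFinset hn hB] at h2
      exact Subtype.ext h2
    -- adjacency transfer
    have hadjt : ∀ A B (hA : e ∉ A.1) (hB : e ∉ B.1), (kneserGraph n k).Adj A B →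
        (kneserGraph (n - 1) k).Adj (rv A hA) (rv B hB) := by
      intro A B hA hB hadj
      obtain ⟨hne, hd⟩ := hadj
      refine ⟨fun hEq => hne (hrv_inj A B hA hB hEq), ?_⟩
      rw [Finset.disjoint_left]
      intro x hx hx'
      exact Finset.disjoint_left.1 hd (mem_restrFinset.1 hx) (mem_restrFinset.1 hx')
    refine ⟨c, ⟨?_, ?_, ?_⟩, ?_, ?_⟩
    · -- positivity
      intro A
      by_cases h : e ∈ A.1
      · rw [hc_new A h]; omega
      · rw [hc_old A h]; exact hc'.1 _
    · -- properness
      intro A B hadj heq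
      obtain ⟨hne, hd⟩ := hadj
      by_cases hA : e ∈ A.1
      · by_cases hB : e ∈ B.1
        · exact Finset.disjoint_left.1 hd hA hB
        · have h1 := hc_new A hA
          have h2 := hc_old B hB
          have h3 := (hbd (rv B hB)).2
          omega
      · by_cases hB : e ∈ B.1
        · have h1 := hc_old A hA
          have h2 := hc_new B hB
          have h3 := (hbd (rv A hA)).2
          omega
        · rw [hc_old A hA, hc_old B hB] at heq
          exact hc'.2.1 _ _ (hadjt A B hA hB ⟨hne, hd⟩) heq
    · -- star-free
      rintro v u w huw hvu hvw ⟨a, hsub⟩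
      have hu : c u = a ∨ c u = a + 1 := by
        have := hsub (show c u ∈ ({c u, c v, c w} : Set ℕ) by simp)
        simpa using this
      have hv : c v = a ∨ c v = a + 1 := by
        have := hsub (show c v ∈ ({c u, c v, c w} : Set ℕ) by simp)
        simpa using this
      have hw : c w = a ∨ c w = a + 1 := by
        have := hsub (show c w ∈ ({c u, c v, c w} : Set ℕ) by simp)
        simpa using this
      by_cases hev : e ∈ v.1
      · have heu : e ∉ u.1 := fun h => Finset.disjoint_left.1 hvu.2 hev h
        have h1 := hc_new v hev
        have h2 := hc_old u heu
        have h3 := (hbd (rv u heu)).2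
        omega
      · by_cases heu : e ∈ u.1
        · have h1 := hc_new u heu
          have h2 := hc_old v hev
          have h3 := (hbd (rv v hev)).2
          omega
        · by_cases hew : e ∈ w.1
          · have h1 := hc_new w hew
            have h2 := hc_old v hev
            have h3 := (hbd (rv v hev)).2
            omega
          · refine hc'.2.2 (rv v hev) (rv u heu) (rv w hew)
              (fun hEq => huw (hrv_inj u w heu hew hEq))
              (hadjt v u hev heu hvu) (hadjt v w hev hew hvw) ⟨a, ?_⟩
            rw [← hc_old u heu, ← hc_old v hev, ← hc_old w hew]
            exact hsub
    · -- bounds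
      intro A
      by_cases h : e ∈ A.1
      · rw [hc_new A h]; simp
      · rw [hc_old A h]
        have := hbd (rv A h)
        simp only [Set.mem_Icc] at this ⊢
        omega
    · -- extension
      intro A
      have hnot : e ∉ (kneserVertexEmb n k A).1 := by
        intro hx
        simp only [kneserVertexEmb, Finset.mem_map, Function.Embedding.coeFn_mk] at hx
        obtain ⟨y, _, hy⟩ := hx
        have h1 : (y : ℕ) = n - 1 := congrArg Fin.val hy
        have := y.isLt
        omega
      rw [hc_old _ hnot]
      congr 1
      exact Subtype.ext (restrFinset_map (A : Finset (Fin (n - 1))))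
  refine ⟨?_, hext⟩
  -- first part
  obtain ⟨t0, ht0, c', hc', hbd⟩ := starFree_exists_aux (kneserGraph (n - 1) k)
  have hSne : {t : ℕ | 0 < t ∧ ∃ c, IsStarFreeColoring (kneserGraph (n - 1) k) c ∧
      ∀ v, c v ∈ Set.Icc 1 t}.Nonempty := ⟨t0, ht0, c', hc', hbd⟩
  have hmem : starFreeChromaticNumber (kneserGraph (n - 1) k) ∈
      {t : ℕ | 0 < t ∧ ∃ c, IsStarFreeColoring (kneserGraph (n - 1) k) c ∧
        ∀ v, c v ∈ Set.Icc 1 t} := Nat.sInf_mem hSne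
  obtain ⟨hpos, c'', hc'', hbd''⟩ := hmem
  obtain ⟨c, hc, hbdc, -⟩ := hext _ c'' hc'' hbd''
  have hm2 : starFreeChromaticNumber (kneserGraph (n - 1) k) + 2 ∈
      {t : ℕ | 0 < t ∧ ∃ c, IsStarFreeColoring (kneserGraph n k) c ∧
        ∀ v, c v ∈ Set.Icc 1 t} := ⟨by omega, c, hc, hbdc⟩
  exact Nat.sInf_le hm2
end

section
/- Let n and k be positive integers with n ≥ 2k ≥ 4, let c be a star-free coloring of KG(n,k), let j be a positive integer, and let i ∈ {1,…,n}. Suppose the color class C_j = c⁻¹(j) has size at least C(n−1,k−1) − C(n−k−1,k−1) + 2 and every vertex A ∈ C_j satisfies i ∈ A. Then every vertex B with c(B) = j − 1 or c(B) = j + 1 also satisfies i ∈ B; in particular the set of vertices colored j−1, j or j+1 induces an edgeless subgraph of KG(n,k). -/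
open Finset in
lemma aux_image_insert {n k : ℕ} (s : Finset (Fin n)) (i : Fin n) (hi : i ∉ s) :
    ((s.powersetCard (k - 1)).image (insert i)).card = s.card.choose (k - 1) := by
  rw [Finset.card_image_of_injOn, card_powersetCard]
  intro t ht u hu h
  have hit : i ∉ t := fun h' => hi ((Finset.mem_powersetCard.1 (Finset.mem_coe.1 ht)).1 h')
  have hiu : i ∉ u := fun h' => hi ((Finset.mem_powersetCard.1 (Finset.mem_coe.1 hu)).1 h')
  have := congrArg (Finset.erase · i) h
  simpa [Finset.erase_insert, hit, hiu] using this

lemma count_contains {n k : ℕ} (hk : 1 ≤ k) (i : Fin n) (s : Finset (Fin n)) (his : i ∉ s) :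
    ((s.powersetCard (k-1)).image (insert i))
      = (((insert i s).powersetCard k).filter (fun t => i ∈ t)) := by
  ext t
  simp only [Finset.mem_image, Finset.mem_filter, Finset.mem_powersetCard]
  constructor
  · rintro ⟨u, hu, rfl⟩
    have hiu : i ∉ u := fun h => his (hu.1 h)
    refine ⟨⟨Finset.insert_subset_insert _ hu.1, ?_⟩, Finset.mem_insert_self _ _⟩
    rw [Finset.card_insert_of_notMem hiu, hu.2]
    omega
  · rintro ⟨⟨hsub, hcard⟩, hit⟩
    refine ⟨t.erase i, ⟨?_, ?_⟩, by rw [Finset.insert_erase hit]⟩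
    · intro x hx
      have := hsub (Finset.mem_of_mem_erase hx)
      rcases Finset.mem_insert.1 this with h | h
      · exact absurd h (Finset.ne_of_mem_erase hx)
      · exact h
    · rw [Finset.card_erase_of_mem hit, hcard]

lemma count_meet {n k : ℕ} (hk : 1 ≤ k) (i : Fin n) (B : Finset (Fin n)) (hB : B.card = k)
    (hiB : i ∉ B) :
    ((Finset.univ.powersetCard k).filter (fun t : Finset (Fin n) => i ∈ t ∧ ¬ Disjoint t B)).card
      ≤ (n-1).choose (k-1) - (n-k-1).choose (k-1) := by
  classical
  set P := (Finset.univ.powersetCard k).filter (fun t : Finset (Fin n) => i ∈ t) with hP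
  set Q := (Finset.univ.powersetCard k).filter
    (fun t : Finset (Fin n) => i ∈ t ∧ Disjoint t B) with hQ
  have hPcard : P.card = (n-1).choose (k-1) := by
    have h1 : (Finset.univ : Finset (Fin n)) = insert i (Finset.univ.erase i) := by
      rw [Finset.insert_erase (Finset.mem_univ i)]
    rw [hP, h1, ← count_contains hk i _ (Finset.notMem_erase i _),
      aux_image_insert _ i (Finset.notMem_erase i _),
      Finset.card_erase_of_mem (Finset.mem_univ i), Finset.card_univ, Fintype.card_fin]
  have hQcard : Q.card = (n-k-1).choose (k-1) := by
    have hiu : i ∈ Finset.univ \ B := by simp [hiB]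
    have h1 : Q = ((Finset.univ \ B).powersetCard k).filter (fun t => i ∈ t) := by
      ext t
      simp only [hQ, Finset.mem_filter, Finset.mem_powersetCard, Finset.subset_sdiff,
        Finset.disjoint_left]
      constructor
      · rintro ⟨⟨h1, h2⟩, h3, h4⟩
        exact ⟨⟨⟨h1, fun a ha hb => h4 ha hb⟩, h2⟩, h3⟩
      · rintro ⟨⟨⟨h1, h4⟩, h2⟩, h3⟩
        exact ⟨⟨h1, h2⟩, h3, fun a ha hb => h4 ha hb⟩
    have h2 : (Finset.univ \ B : Finset (Fin n)) = insert i ((Finset.univ \ B).erase i) := by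
      rw [Finset.insert_erase hiu]
    rw [h1, h2, ← count_contains hk i _ (Finset.notMem_erase i _),
      aux_image_insert _ i (Finset.notMem_erase i _),
      Finset.card_erase_of_mem hiu, Finset.card_sdiff_of_subset (Finset.subset_univ B),
      Finset.card_univ, Fintype.card_fin, hB]
  have hQP : Q ⊆ P := by
    intro t ht
    simp only [hQ, hP, Finset.mem_filter] at ht ⊢
    exact ⟨ht.1, ht.2.1⟩
  have hsplit : (Finset.univ.powersetCard k).filter
      (fun t : Finset (Fin n) => i ∈ t ∧ ¬ Disjoint t B) = P \ Q := by
    ext t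
    simp only [hP, hQ, Finset.mem_sdiff, Finset.mem_filter]
    tauto
  rw [hsplit, Finset.card_sdiff_of_subset hQP, hPcard, hQcard]

/-- Let `c` be a star-free coloring of `KG(n,k)` with
`n ≥ 2k ≥ 4`, let `j ≥ 1`, and suppose the color class `c⁻¹(j)` has size at
least `C(n−1,k−1) − C(n−k−1,k−1) + 2` and all its members contain `i`. Then
every vertex colored `j − 1` or `j + 1` also contains `i`; in particular the
vertices colored `j−1`, `j` or `j+1` induce an edgeless subgraph. -/
theorem starFree_neighboring_classes_share_element (n k : ℕ) (hk : 0 < k) (hn : 0 < n)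
    (h2k : 2 ≤ k) (hnk : 2 * k ≤ n)
    (c : {A : Finset (Fin n) // A.card = k} → ℕ)
    (hc : IsStarFreeColoring (kneserGraph n k) c)
    (j : ℕ) (hj : 1 ≤ j) (i : Fin n)
    (hsize : (n - 1).choose (k - 1) - (n - k - 1).choose (k - 1) + 2 ≤
      {A : {A : Finset (Fin n) // A.card = k} | c A = j}.ncard)
    (hi : ∀ A, c A = j → i ∈ (A : Finset (Fin n))) :
    (∀ B, (c B = j - 1 ∨ c B = j + 1) → i ∈ (B : Finset (Fin n))) ∧
    (∀ A B, (c A = j - 1 ∨ c A = j ∨ c A = j + 1) →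
      (c B = j - 1 ∨ c B = j ∨ c B = j + 1) → ¬ (kneserGraph n k).Adj A B) := by
  classical
  have hk1 : 1 ≤ k := hk
  have part1 : ∀ B, (c B = j - 1 ∨ c B = j + 1) → i ∈ (B : Finset (Fin n)) := by
    intro B hB
    by_contra hiB
    have hcB1 : 1 ≤ c B := hc.1 B
    have hcBj : c B ≠ j := by omega
    set T : Finset {A : Finset (Fin n) // A.card = k} :=
      Finset.univ.filter (fun A => c A = j) with hT
    have hsize' : (n - 1).choose (k - 1) - (n - k - 1).choose (k - 1) + 2 ≤ T.card := by
      have heq : {A : {A : Finset (Fin n) // A.card = k} | c A = j} = ↑T := by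
        ext A; simp [hT]
      rwa [heq, Set.ncard_coe_finset] at hsize
    set T₂ := T.filter (fun A : {A : Finset (Fin n) // A.card = k} => ¬ Disjoint (A : Finset (Fin n)) B) with hT₂
    set T₁ := T.filter (fun A : {A : Finset (Fin n) // A.card = k} => Disjoint (A : Finset (Fin n)) B) with hT₁
    have hT₂card : T₂.card ≤ (n-1).choose (k-1) - (n-k-1).choose (k-1) := by
      have himg : T₂.image Subtype.val ⊆
          (Finset.univ.powersetCard k).filter
            (fun t : Finset (Fin n) => i ∈ t ∧ ¬ Disjoint t B) := by
        intro s hs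
        obtain ⟨A, hA, rfl⟩ := Finset.mem_image.1 hs
        simp only [hT₂, hT, Finset.mem_filter, Finset.mem_univ, true_and] at hA
        refine Finset.mem_filter.2 ⟨Finset.mem_powersetCard.2 ⟨Finset.subset_univ _, A.2⟩,
          hi A hA.1, hA.2⟩
      calc T₂.card = (T₂.image Subtype.val).card :=
            (Finset.card_image_of_injective _ Subtype.val_injective).symm
        _ ≤ _ := Finset.card_le_card himg
        _ ≤ _ := count_meet hk1 i B B.2 hiB
    have hsum : T₁.card + T₂.card = T.card :=
      Finset.card_filter_add_card_filter_not _
    have hT₁2 : 1 < T₁.card := by omega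
    obtain ⟨A₁, hA₁, A₂, hA₂, hne⟩ := Finset.one_lt_card.1 hT₁2
    simp only [hT₁, hT, Finset.mem_filter, Finset.mem_univ, true_and] at hA₁ hA₂
    have adj1 : (kneserGraph n k).Adj B A₁ := by
      refine ⟨fun h => hcBj (h ▸ hA₁.1), ?_⟩
      exact hA₁.2.symm
    have adj2 : (kneserGraph n k).Adj B A₂ := by
      refine ⟨fun h => hcBj (h ▸ hA₂.1), ?_⟩
      exact hA₂.2.symm
    refine hc.2.2 B A₁ A₂ hne adj1 adj2 ?_
    rcases hB with hB | hB
    · refine ⟨j - 1, ?_⟩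
      intro x hx
      simp only [Set.mem_insert_iff, Set.mem_singleton_iff, hA₁.1, hA₂.1, hB] at hx ⊢
      omega
    · refine ⟨j, ?_⟩
      intro x hx
      simp only [Set.mem_insert_iff, Set.mem_singleton_iff, hA₁.1, hA₂.1, hB] at hx ⊢
      omega
  refine ⟨part1, ?_⟩
  intro A B hA hB hadj
  have hiA : i ∈ (A : Finset (Fin n)) := by
    rcases hA with h | h | h
    · exact part1 A (Or.inl h)
    · exact hi A h
    · exact part1 A (Or.inr h)
  have hiB : i ∈ (B : Finset (Fin n)) := by
    rcases hB with h | h | h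
    · exact part1 B (Or.inl h)
    · exact hi B h
    · exact part1 B (Or.inr h)
  exact Finset.disjoint_left.1 hadj.2 hiA hiB
end

section
/- For all integers n and k with k ≥ 3 and n ≥ 2k, C(n−1,k−1) − C(n−k−1,k−1) + 2 ≤ k · C(n−2,k−2). -/
section AuxChoose
open Finset

lemma choose_succ_lt (a r : ℕ) (hr : 1 ≤ r) (hra : r ≤ a) :
    a.choose r < (a+1).choose r := by
  obtain ⟨s, rfl⟩ : ∃ s, r = s + 1 := ⟨r - 1, by omega⟩
  rw [Nat.choose_succ_succ]
  have : 0 < a.choose s := Nat.choose_pos (by omega)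
  simp only [Nat.succ_eq_add_one] at *
  omega

lemma choose_strict (a m r : ℕ) (hr : 1 ≤ r) (hra : r ≤ a) (ham : a < m) :
    a.choose r + 1 ≤ m.choose r := by
  have h1 : a.choose r < (a+1).choose r := choose_succ_lt a r hr hra
  have h2 : (a+1).choose r ≤ m.choose r := Nat.choose_le_choose r (by omega)
  omega

lemma key' (r m : ℕ) (hr : 1 ≤ r) (hm : 2*r+2 ≤ m) :
    (m+1).choose (r+1) + 2 ≤ (r+2) * m.choose r + (m-r-1).choose (r+1) := by
  have h1 : (m+1).choose (r+1) = ∑ i ∈ Icc r m, i.choose r :=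
    (Nat.sum_Icc_choose m r).symm
  have h2 : (m-r-1).choose (r+1) = ∑ i ∈ Icc r (m-r-2), i.choose r := by
    rw [Nat.sum_Icc_choose]
    congr 1
    omega
  have hico : ∀ a b, Icc a b = Ico a (b+1) := fun a b => by
    ext x; simp [Nat.lt_succ_iff]
  have hsplit : ∑ i ∈ Ico r (m-r-1), i.choose r + ∑ i ∈ Ico (m-r-1) (m+1), i.choose r
      = ∑ i ∈ Ico r (m+1), i.choose r :=
    Finset.sum_Ico_consecutive _ (by omega) (by omega)
  have hsplit2 : ∑ i ∈ Ico (m-r-1) (m-r+1), i.choose r + ∑ i ∈ Ico (m-r+1) (m+1), i.choose r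
      = ∑ i ∈ Ico (m-r-1) (m+1), i.choose r :=
    Finset.sum_Ico_consecutive _ (by omega) (by omega)
  have hfirst : ∑ i ∈ Ico (m-r-1) (m-r+1), i.choose r ≤ 2 * m.choose r - 2 := by
    have : Ico (m-r-1) (m-r+1) = {m-r-1, m-r} := by
      ext x; simp [Finset.mem_Ico]; omega
    rw [this, Finset.sum_insert (by simp; omega), Finset.sum_singleton]
    have b1 := choose_strict (m-r-1) m r hr (by omega) (by omega)
    have b2 := choose_strict (m-r) m r hr (by omega) (by omega)
    omega
  have hsecond : ∑ i ∈ Ico (m-r+1) (m+1), i.choose r ≤ r * m.choose r := by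
    calc ∑ i ∈ Ico (m-r+1) (m+1), i.choose r
        ≤ ∑ _i ∈ Ico (m-r+1) (m+1), m.choose r := by
          apply Finset.sum_le_sum
          intro i hi
          simp [Finset.mem_Ico] at hi
          exact Nat.choose_le_choose r (by omega)
      _ = r * m.choose r := by rw [Finset.sum_const, Nat.card_Ico, smul_eq_mul]; congr 1; omega
  have hpos : 2 ≤ m.choose r := choose_strict r m r hr le_rfl (by omega) |>.trans_eq' (by simp [Nat.choose_self])
  rw [h1, h2, hico r m, hico r (m-r-2)]
  have : Ico r (m-r-2+1) = Ico r (m-r-1) := by congr 1; omega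
  rw [this]
  have hk2 : (r+2) * m.choose r = r * m.choose r + 2 * m.choose r := by ring
  omega

end AuxChoose

/-- For `k ≥ 3` and `n ≥ 2k`,
`C(n−1,k−1) − C(n−k−1,k−1) + 2 ≤ k·C(n−2,k−2)`. -/
theorem choose_diff_le_k_mul_choose (n k : ℕ) (hk : 3 ≤ k) (hnk : 2 * k ≤ n) :
    ((n - 1).choose (k - 1) : ℤ) - ((n - k - 1).choose (k - 1) : ℤ) + 2 ≤
      (k : ℤ) * ((n - 2).choose (k - 2) : ℤ) := by
  have h := key' (k-2) (n-2) (by omega) (by omega)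
  have e1 : n - 2 + 1 = n - 1 := by omega
  have e2 : k - 2 + 1 = k - 1 := by omega
  have e3 : n - 2 - (k-2) - 1 = n - k - 1 := by omega
  have e4 : k - 2 + 2 = k := by omega
  rw [e1, e2, e3, e4] at h
  have := Int.ofNat_le.mpr h
  push_cast at this ⊢
  linarith
end
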